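/- Let d_1, …, d_k be pairwise coprime positive integers with product n. Then Φ_n(x) is the greatest common divisor in ℤ[x] of the polynomials Φ_{d_i}(x^{n/d_i}) for i = 1, …, k. -/

import Mathlib

open Polynomial

theorem cyclotomic_is_gcd_of_coprime_factors (k : ℕ) (hk : 0 < k)
    (d : Fin k → ℕ) (hd : ∀ i, 0 < d i)
    (hcop : ∀ i j, i ≠ j → Nat.Coprime (d i) (d j))
    (n : ℕ) (hn : n = ∏ i, d i) :
    (∀ i, Polynomial.cyclotomic n ℤ ∣
        (Polynomial.expand ℤ (n / d i)) (Polynomial.cyclotomic (d i) ℤ)) ∧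
    ∀ g : Polynomial ℤ,
      (∀ i, g ∣ (Polynomial.expand ℤ (n / d i)) (Polynomial.cyclotomic (d i) ℤ)) →
        g ∣ Polynomial.cyclotomic n ℤ := by
  have hnpos : 0 < n := hn ▸ Finset.prod_pos (fun i _ => hd i)
  have hdvd : ∀ i, d i ∣ n := fun i => hn ▸ Finset.dvd_prod_of_mem d (Finset.mem_univ i)
  have hqpos : ∀ i, 0 < n / d i := fun i =>
    Nat.div_pos (Nat.le_of_dvd hnpos (hdvd i)) (hd i)
  obtain ⟨ζ, hζ⟩ : ∃ ζ : ℂ, IsPrimitiveRoot ζ n :=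
    ⟨_, Complex.isPrimitiveRoot_exp n hnpos.ne'⟩
  have hζpow : ∀ i, IsPrimitiveRoot (ζ ^ (n / d i)) (d i) := fun i =>
    hζ.pow hnpos (Nat.div_mul_cancel (hdvd i)).symm
  constructor
  · intro i
    rw [cyclotomic_eq_minpoly hζ hnpos]
    refine minpoly.isIntegrallyClosed_dvd (hζ.isIntegral hnpos) ?_
    rw [expand_aeval]
    have h := (hζpow i).isRoot_cyclotomic (hd i)
    simpa [aeval_def, eval₂_eq_eval_map, map_cyclotomic, IsRoot.def] using h
  · intro g hg
    have hmonic : ∀ i, ((expand ℤ (n / d i)) (cyclotomic (d i) ℤ)).Monic := fun i =>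
      (cyclotomic.monic _ _).expand (hqpos i)
    have hgprim : g.IsPrimitive :=
      Polynomial.isPrimitive_of_dvd (hmonic ⟨0, hk⟩).isPrimitive (hg ⟨0, hk⟩)
    set gQ : ℚ[X] := g.map (algebraMap ℤ ℚ) with hgQdef
    have hgQ : ∀ i, gQ ∣ (expand ℚ (n / d i)) (cyclotomic (d i) ℚ) := by
      intro i
      have h := Polynomial.map_dvd (algebraMap ℤ ℚ) (hg i)
      rwa [map_expand, map_cyclotomic] at h
    -- key: gQ divides cyclotomic n ℚ
    have key : gQ ∣ cyclotomic n ℚ := by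
      have hXn : gQ ∣ cyclotomic n ℚ * ∏ e ∈ n.properDivisors, cyclotomic e ℚ := by
        have h1 : gQ ∣ ((X : ℚ[X]) ^ n - 1) := by
          refine (hgQ ⟨0, hk⟩).trans ?_
          have : (expand ℚ (n / d ⟨0, hk⟩)) ((X : ℚ[X]) ^ (d ⟨0, hk⟩) - 1) =
              (X : ℚ[X]) ^ n - 1 := by
            rw [map_sub, map_pow, expand_X, map_one, ← pow_mul,
              Nat.div_mul_cancel (hdvd ⟨0, hk⟩)]
          rw [← this]
          exact _root_.map_dvd (expand ℚ (n / d ⟨0, hk⟩)) (cyclotomic.dvd_X_pow_sub_one _ _)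
        rwa [← prod_cyclotomic_eq_X_pow_sub_one hnpos,
          ← Nat.insert_self_properDivisors hnpos.ne',
          Finset.prod_insert Nat.self_notMem_properDivisors] at h1
      have hcopr : IsCoprime gQ (∏ e ∈ n.properDivisors, cyclotomic e ℚ) := by
        refine IsCoprime.prod_right fun e he => ?_
        have hepos : 0 < e := Nat.pos_of_mem_properDivisors he
        have hirr := cyclotomic.irreducible_rat hepos
        refine ((hirr.coprime_iff_not_dvd).mpr ?_).symm
        intro hdvd'
        -- then e must be a multiple of every d i, hence of n : contradiction
        obtain ⟨ξ, hξ⟩ : ∃ ξ : ℂ, IsPrimitiveRoot ξ e :=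
          ⟨_, Complex.isPrimitiveRoot_exp e hepos.ne'⟩
        have hdie : ∀ i, d i ∣ e := by
          intro i
          have hroot : (aeval ξ) ((expand ℚ (n / d i)) (cyclotomic (d i) ℚ)) = 0 := by
            have h0 : (aeval ξ) (cyclotomic e ℚ) = 0 := by
              simpa [aeval_def, eval₂_eq_eval_map, map_cyclotomic, IsRoot.def]
                using hξ.isRoot_cyclotomic hepos
            obtain ⟨c, hc⟩ := hdvd'.trans (hgQ i)
            rw [hc, map_mul, h0, zero_mul]
          rw [expand_aeval] at hroot
          haveI : NeZero ((d i : ℂ)) := ⟨Nat.cast_ne_zero.mpr (hd i).ne'⟩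
          have hprim : IsPrimitiveRoot (ξ ^ (n / d i)) (d i) := by
            rw [← isRoot_cyclotomic_iff (n := d i) (μ := ξ ^ (n / d i))]
            simpa [aeval_def, eval₂_eq_eval_map, map_cyclotomic, IsRoot.def] using hroot
          have : (ξ ^ (n / d i)) ^ e = 1 := by
            rw [← pow_mul, mul_comm, pow_mul, hξ.pow_eq_one, one_pow]
          exact (hprim.pow_eq_one_iff_dvd e).mp this
        have hne : n ∣ e := by
          have hZ : (n : ℤ) ∣ (e : ℤ) := by
            rw [hn]
            push_cast
            refine Fintype.prod_dvd_of_coprime ?_ fun i => Int.natCast_dvd_natCast.mpr (hdie i)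
            intro i j hij
            exact (hcop i j hij).isCoprime
          exact_mod_cast hZ
        have : ¬ n ∣ e := by
          intro h
          have := Nat.le_of_dvd hepos h
          have := (Nat.mem_properDivisors.mp he).2
          omega
        exact this hne
      exact hcopr.dvd_of_dvd_mul_right hXn
    have : gQ ∣ (cyclotomic n ℤ).map (algebraMap ℤ ℚ) := by rwa [map_cyclotomic]
    exact hgprim.dvd_of_fraction_map_dvd_fraction_map this
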